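/- arXiv:1205.0499 — 3 statements merged into one kernel-verified Lean document; each statement's English description precedes it below -/
import Mathlib

section
/- Under the assumptions of the preceding determinant bounds, with C(τ_h,τ_c) the 2N×2N block matrix [[V⁻¹+τ_h I, V⁻¹],[V⁻¹, V⁻¹+τ_c Q]], the ratio τ_h^{N/2} τ_c^{(N−1)/2} / det(C(τ_h,τ_c))^{1/2} is bounded above by ((min Y + τ_h)/min Y)^{1/2} · (τ_h^{1/2} ∏_{i=1}^{N−1} λ_i^{1/2})⁻¹. -/
open Matrix

lemma smul_posSemidef' {m : Type*} [Fintype m] {c : ℝ} (hc : 0 ≤ c)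
    {Q : Matrix m m ℝ} (hQ : Q.PosSemidef) : (c • Q).PosSemidef := by
  exact hQ.smul hc

lemma det_one_add_psd {m : Type*} [Fintype m] [DecidableEq m]
    {M : Matrix m m ℝ} (hM : M.PosSemidef) : 1 ≤ (1 + M).det := by
  have h1 := hM.1.spectral_theorem
  set V := (hM.1.eigenvectorUnitary : Matrix m m ℝ) with hV
  have hVV : V * star V = 1 := Matrix.mem_unitaryGroup_iff.mp hM.1.eigenvectorUnitary.2
  set D1 : Matrix m m ℝ := 1 + Matrix.diagonal (RCLike.ofReal ∘ hM.1.eigenvalues) with hD1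
  have key : 1 + M = V * D1 * star V := by
    rw [hD1, Matrix.mul_add, Matrix.add_mul, Matrix.mul_one, hVV]
    exact congrArg (1 + ·) h1
  have h2 : V.det * (star V).det = 1 := by rw [← det_mul, hVV, det_one]
  have hdet : (1 + M).det = D1.det := by
    rw [key, det_mul, det_mul, mul_right_comm, h2, one_mul]
  rw [hdet]
  have : D1 = Matrix.diagonal (fun i => 1 + hM.1.eigenvalues i) := by
    rw [hD1, ← Matrix.diagonal_one, Matrix.diagonal_add]
    rfl
  rw [this, det_diagonal]
  calc (1:ℝ) = ∏ _i : m, 1 := by simp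
    _ ≤ ∏ i : m, (1 + hM.1.eigenvalues i) :=
        Finset.prod_le_prod (fun i _ => zero_le_one)
          (fun i _ => by linarith [hM.eigenvalues_nonneg i])

open scoped MatrixOrder in
lemma det_le_det_add_psd {m : Type*} [Fintype m] [DecidableEq m]
    {P B : Matrix m m ℝ} (hP : P.PosDef) (hB : B.PosSemidef) :
    P.det ≤ (P + B).det := by
  set S := CFC.sqrt P with hS
  have hSS : S * S = P := CFC.sqrt_mul_sqrt_self P hP.posSemidef.nonneg
  have hdet : S.det * S.det = P.det := by rw [← det_mul, hSS]
  have hPdet : (0:ℝ) < P.det := hP.det_pos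
  have hSdet : IsUnit S.det := by
    refine isUnit_iff_ne_zero.mpr fun h => ?_
    rw [h, mul_zero] at hdet
    exact hPdet.ne' hdet.symm
  have hSherm : S.IsHermitian := (CFC.sqrt_nonneg P).posSemidef.1
  have hM : (S⁻¹ * B * S⁻¹).PosSemidef := by
    have := hB.mul_mul_conjTranspose_same S⁻¹
    rwa [hSherm.inv.eq] at this
  have key : P + B = S * (1 + S⁻¹ * B * S⁻¹) * S := by
    rw [Matrix.mul_add, Matrix.add_mul, Matrix.mul_one, hSS]
    congr 1
    rw [← Matrix.mul_assoc, ← Matrix.mul_assoc, Matrix.mul_nonsing_inv _ hSdet,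
      Matrix.one_mul, Matrix.mul_assoc, Matrix.nonsing_inv_mul _ hSdet, Matrix.mul_one]
  calc P.det = P.det * 1 := (mul_one _).symm
    _ ≤ P.det * (1 + S⁻¹ * B * S⁻¹).det :=
        mul_le_mul_of_nonneg_left (det_one_add_psd hM) hPdet.le
    _ = (P + B).det := by
        rw [key, det_mul, det_mul, mul_comm S.det, mul_assoc, ← hdet]; ring

lemma sqrt_finset_prod {ι : Type*} (s : Finset ι) (f : ι → ℝ) (h : ∀ i ∈ s, 0 ≤ f i) :
    Real.sqrt (∏ i ∈ s, f i) = ∏ i ∈ s, Real.sqrt (f i) := by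
  induction s using Finset.cons_induction with
  | empty => simp
  | cons i s hi ih =>
      rw [Finset.prod_cons, Finset.prod_cons,
        Real.sqrt_mul (h i (Finset.mem_cons_self i s)),
        ih fun j hj => h j (Finset.mem_cons_of_mem hj)]

theorem det_ratio_bound {n : ℕ}
    (Y : Fin (n + 1) → ℝ) (hY : ∀ i, 0 < Y i)
    (Q U : Matrix (Fin (n + 1)) (Fin (n + 1)) ℝ) (l : Fin (n + 1) → ℝ)
    (hQpsd : Q.PosSemidef)
    (hU : U ∈ Matrix.orthogonalGroup (Fin (n + 1)) ℝ)
    (hdiag : Q = U * Matrix.diagonal l * U.transpose)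
    (hlast : l (Fin.last n) = 0)
    (hpos : ∀ i : Fin (n + 1), i ≠ Fin.last n → 0 < l i)
    (τh τc : ℝ) (hτh : 0 < τh) (hτc : 0 < τc)
    (C : Matrix (Fin (n + 1) ⊕ Fin (n + 1)) (Fin (n + 1) ⊕ Fin (n + 1)) ℝ)
    (hC : C = Matrix.fromBlocks
      (Matrix.diagonal Y + τh • (1 : Matrix (Fin (n + 1)) (Fin (n + 1)) ℝ))
      (Matrix.diagonal Y) (Matrix.diagonal Y)
      (Matrix.diagonal Y + τc • Q))
    (mY : ℝ) (hmY : mY = Finset.univ.inf' Finset.univ_nonempty Y) :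
    τh ^ ((n + 1 : ℝ) / 2) * τc ^ ((n : ℝ) / 2) / Real.sqrt C.det ≤
      Real.sqrt ((mY + τh) / mY) /
        (Real.sqrt τh * ∏ i : Fin n, Real.sqrt (l i.castSucc)) := by
  -- basic positivity facts
  have hmY0 : 0 < mY := by
    rw [hmY]; exact (Finset.lt_inf'_iff _).mpr fun i _ => hY i
  have hmYle : ∀ i, mY ≤ Y i := fun i => hmY ▸ Finset.inf'_le _ (Finset.mem_univ i)
  have hw : ∀ i, Y i + τh ≠ 0 := fun i => by have := hY i; positivity
  -- the top-left block
  have hAeq : Matrix.diagonal Y + τh • (1 : Matrix (Fin (n + 1)) (Fin (n + 1)) ℝ)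
      = Matrix.diagonal (fun i => Y i + τh) := by
    rw [Matrix.smul_one_eq_diagonal, Matrix.diagonal_add]
  have hmul : Matrix.diagonal (fun i => Y i + τh) *
      Matrix.diagonal (fun i => (Y i + τh)⁻¹) = 1 := by
    rw [Matrix.diagonal_mul_diagonal,
      show (fun i => (Y i + τh) * (Y i + τh)⁻¹) = fun _ => (1:ℝ) from
        funext fun i => mul_inv_cancel₀ (hw i), Matrix.diagonal_one]
  have hmul' : Matrix.diagonal (fun i => (Y i + τh)⁻¹) *
      Matrix.diagonal (fun i => Y i + τh) = 1 := by
    rw [Matrix.diagonal_mul_diagonal,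
      show (fun i => (Y i + τh)⁻¹ * (Y i + τh)) = fun _ => (1:ℝ) from
        funext fun i => inv_mul_cancel₀ (hw i), Matrix.diagonal_one]
  haveI hAinv : Invertible (Matrix.diagonal (fun i => Y i + τh)) :=
    ⟨Matrix.diagonal (fun i => (Y i + τh)⁻¹), hmul', hmul⟩
  have hinvOf : ⅟(Matrix.diagonal (fun i => Y i + τh))
      = Matrix.diagonal (fun i => (Y i + τh)⁻¹) := invOf_eq_right_inv hmul
  -- Schur complement
  set a : Fin (n+1) → ℝ := fun i => Y i - Y i * (Y i + τh)⁻¹ * Y i with ha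
  have hSchur : (Matrix.diagonal Y + τc • Q) -
      Matrix.diagonal Y * ⅟(Matrix.diagonal (fun i => Y i + τh)) * Matrix.diagonal Y
      = Matrix.diagonal a + τc • Q := by
    rw [hinvOf, Matrix.diagonal_mul_diagonal, Matrix.diagonal_mul_diagonal,
      add_sub_right_comm, ← Matrix.diagonal_sub]
  have hdetC : C.det = (Matrix.diagonal (fun i => Y i + τh)).det *
      (Matrix.diagonal a + τc • Q).det := by
    rw [hC, hAeq, Matrix.det_fromBlocks₁₁, hSchur]
  -- lower bound pieces
  have ha' : ∀ i, a i = τh * Y i / (Y i + τh) := fun i => by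
    rw [ha]; field_simp [hw i]; ring
  set α : ℝ := τh * mY / (mY + τh) with hα
  have hmYτh : (0:ℝ) < mY + τh := by linarith
  have hα0 : 0 < α := by rw [hα]; positivity
  have haα : ∀ i, α ≤ a i := fun i => by
    rw [ha' i, hα, div_le_div_iff₀ hmYτh (by have := hY i; positivity)]
    nlinarith [mul_le_mul_of_nonneg_left (hmYle i) (mul_pos hτh hτh).le]
  have hτcQ : (τc • Q).PosSemidef := smul_posSemidef' hτc.le hQpsd
  have hPposdef : (Matrix.diagonal (fun _ : Fin (n+1) => α) + τc • Q).PosDef :=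
    (Matrix.posDef_diagonal_iff.mpr fun i => hα0).add_posSemidef hτcQ
  have hBpsd : (Matrix.diagonal (fun i => a i - α)).PosSemidef :=
    Matrix.posSemidef_diagonal_iff.mpr fun i => sub_nonneg.mpr (haα i)
  have hsplit : Matrix.diagonal a + τc • Q =
      (Matrix.diagonal (fun _ : Fin (n+1) => α) + τc • Q) +
        Matrix.diagonal (fun i => a i - α) := by
    rw [add_right_comm, Matrix.diagonal_add]
    have h : (fun i => α + (a i - α)) = a := by funext i; ring
    rw [h]
  -- determinant of the P part via orthogonal diagonalization
  have hUUt : U * U.transpose = 1 := by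
    have h : U * star U = 1 := hU.2
    rwa [Matrix.star_eq_conjTranspose, Matrix.conjTranspose_eq_transpose_of_trivial] at h
  have hPdecomp : Matrix.diagonal (fun _ : Fin (n+1) => α) + τc • Q =
      U * Matrix.diagonal (fun i => α + τc * l i) * U.transpose := by
    have h1 : Matrix.diagonal (fun i : Fin (n+1) => α + τc * l i)
        = α • (1 : Matrix (Fin (n+1)) (Fin (n+1)) ℝ) + τc • Matrix.diagonal l := by
      rw [Matrix.smul_one_eq_diagonal, ← Matrix.diagonal_smul, ← Matrix.diagonal_add]
      rfl
    rw [h1, Matrix.mul_add, Matrix.add_mul, hdiag]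
    congr 1
    · rw [Matrix.mul_smul, Matrix.smul_mul, Matrix.mul_one, hUUt, Matrix.smul_one_eq_diagonal]
    · rw [Matrix.mul_smul, Matrix.smul_mul]
  have hdetU : U.det * U.transpose.det = 1 := by
    rw [← Matrix.det_mul, hUUt, Matrix.det_one]
  have hdetP : (Matrix.diagonal (fun _ : Fin (n+1) => α) + τc • Q).det
      = ∏ i, (α + τc * l i) := by
    rw [hPdecomp, Matrix.det_mul, Matrix.det_mul, mul_right_comm, hdetU, one_mul,
      Matrix.det_diagonal]
  have hl : ∀ i : Fin n, 0 < l i.castSucc := fun i => hpos _ (Fin.castSucc_lt_last i).ne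
  have hprodpos : 0 < ∏ i : Fin n, (τc * l i.castSucc) :=
    Finset.prod_pos fun i _ => mul_pos hτc (hl i)
  have hdetPge : α * ∏ i : Fin n, (τc * l i.castSucc) ≤
      (Matrix.diagonal (fun _ : Fin (n+1) => α) + τc • Q).det := by
    rw [hdetP, Fin.prod_univ_castSucc, hlast, mul_zero, add_zero, mul_comm]
    refine mul_le_mul_of_nonneg_right ?_ hα0.le
    exact Finset.prod_le_prod (fun i _ => (mul_pos hτc (hl i)).le)
      (fun i _ => by linarith [hα0])
  have hdetA : τh ^ (n+1) ≤ (Matrix.diagonal (fun i => Y i + τh)).det := by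
    rw [Matrix.det_diagonal]
    calc τh ^ (n+1) = ∏ _i : Fin (n+1), τh := by
          rw [Finset.prod_const, Finset.card_univ, Fintype.card_fin]
      _ ≤ ∏ i, (Y i + τh) :=
          Finset.prod_le_prod (fun _ _ => hτh.le) (fun i _ => by linarith [hY i])
  set K : ℝ := τh ^ (n+1) * (α * ∏ i : Fin n, (τc * l i.castSucc)) with hK
  have hK0 : 0 < K := mul_pos (pow_pos hτh _) (mul_pos hα0 hprodpos)
  have hKle : K ≤ C.det := by
    rw [hdetC, hsplit]
    have h1 := det_le_det_add_psd hPposdef hBpsd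
    have h2 : α * ∏ i : Fin n, (τc * l i.castSucc) ≤
        ((Matrix.diagonal (fun _ : Fin (n+1) => α) + τc • Q) +
          Matrix.diagonal (fun i => a i - α)).det := le_trans hdetPge h1
    exact mul_le_mul hdetA h2 (mul_pos hα0 hprodpos).le
      (le_trans (pow_pos hτh _).le hdetA)
  -- final arithmetic
  have hplpos : 0 < ∏ i : Fin n, l i.castSucc := Finset.prod_pos fun i _ => hl i
  have hprodl : ∏ i : Fin n, (τc * l i.castSucc) = τc ^ n * ∏ i : Fin n, l i.castSucc := by
    rw [Finset.prod_mul_distrib, Finset.prod_const, Finset.card_univ, Fintype.card_fin]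
  have hkey : (τh ^ (n+1) * τc ^ n) / K =
      ((mY + τh) / mY) / (τh * ∏ i : Fin n, l i.castSucc) := by
    rw [hK, hα, hprodl]
    field_simp
  have hE1 : τh ^ ((n + 1 : ℝ) / 2) = Real.sqrt (τh ^ (n+1)) := by
    rw [Real.sqrt_eq_rpow, ← Real.rpow_natCast τh (n+1), ← Real.rpow_mul hτh.le, mul_one_div]
    norm_num
  have hE2 : τc ^ ((n : ℝ) / 2) = Real.sqrt (τc ^ n) := by
    rw [Real.sqrt_eq_rpow, ← Real.rpow_natCast τc n, ← Real.rpow_mul hτc.le, mul_one_div]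
  have hsqrtprod : ∏ i : Fin n, Real.sqrt (l i.castSucc)
      = Real.sqrt (∏ i : Fin n, l i.castSucc) :=
    (sqrt_finset_prod _ _ fun i _ => (hl i).le).symm
  have hfinal : τh ^ ((n + 1 : ℝ) / 2) * τc ^ ((n : ℝ) / 2) / Real.sqrt K =
      Real.sqrt ((mY + τh) / mY) /
        (Real.sqrt τh * ∏ i : Fin n, Real.sqrt (l i.castSucc)) := by
    rw [hE1, hE2, ← Real.sqrt_mul (by positivity), ← Real.sqrt_div (by positivity), hkey,
      Real.sqrt_div (by positivity), hsqrtprod, ← Real.sqrt_mul hτh.le]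
  rw [← hfinal]
  exact div_le_div_of_nonneg_left (by positivity) (Real.sqrt_pos.mpr hK0)
    (Real.sqrt_le_sqrt hKle)
end

section
/- Let B = [τ_c Q̃ + diag(τ_h Y_i/(Y_i+τ_h))]⁻¹ where Q̃ is symmetric positive definite, Y_i > 0, τ_h, τ_c > 0, and let μ = B · diag(τ_h Y_i²/(Y_i+τ_h)) · û. Then ‖τ_c μ‖ ≤ ‖Q̃⁻¹‖ · ‖diag(Y²)‖ · ‖û‖. -/
open Matrix
open scoped MatrixOrder

section aux
variable {N : ℕ}

private lemma dot_eq_inner (x y : Fin N → ℝ) :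
    x ⬝ᵥ y = inner (𝕜 := ℝ) ((WithLp.equiv 2 (Fin N → ℝ)).symm x)
      ((WithLp.equiv 2 (Fin N → ℝ)).symm y) := by
  change x ⬝ᵥ y = y ⬝ᵥ star x
  simp [dotProduct_comm]

private lemma norm_sq_eq_dot (x : Fin N → ℝ) :
    ‖(WithLp.equiv 2 (Fin N → ℝ)).symm x‖ ^ 2 = x ⬝ᵥ x := by
  rw [dot_eq_inner, real_inner_self_eq_norm_sq]

private lemma clm_apply_symm (M : Matrix (Fin N) (Fin N) ℝ) (x : Fin N → ℝ) :
    Matrix.toEuclideanCLM (𝕜 := ℝ) M ((WithLp.equiv 2 (Fin N → ℝ)).symm x)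
      = (WithLp.equiv 2 (Fin N → ℝ)).symm (M *ᵥ x) := by
  exact Matrix.toEuclideanCLM_toLp M x

private lemma norm_mulVec_le (M : Matrix (Fin N) (Fin N) ℝ) (x : Fin N → ℝ) :
    ‖(WithLp.equiv 2 (Fin N → ℝ)).symm (M *ᵥ x)‖ ≤
      ‖Matrix.toEuclideanCLM (𝕜 := ℝ) M‖ * ‖(WithLp.equiv 2 (Fin N → ℝ)).symm x‖ := by
  have := (Matrix.toEuclideanCLM (𝕜 := ℝ) M).le_opNorm ((WithLp.equiv 2 (Fin N → ℝ)).symm x)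
  rwa [clm_apply_symm] at this

end aux

private lemma key_ineq {N : ℕ} (Qt : Matrix (Fin N) (Fin N) ℝ) (hQt : Qt.PosDef)
    (y : Fin N → ℝ) :
    y ⬝ᵥ y ≤ ‖Matrix.toEuclideanCLM (𝕜 := ℝ) Qt⁻¹‖ * (y ⬝ᵥ (Qt *ᵥ y)) := by
  set r := ‖Matrix.toEuclideanCLM (𝕜 := ℝ) Qt⁻¹‖ with hr
  have hrn : 0 ≤ r := norm_nonneg _
  have hS : (Qt⁻¹).PosDef := hQt.inv
  set R := CFC.sqrt Qt⁻¹ with hRdef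
  have hRR : R * R = Qt⁻¹ := CFC.sqrt_mul_sqrt_self _ hS.posSemidef.nonneg
  have hRH : Rᵀ = R := by
    have := (CFC.sqrt_nonneg Qt⁻¹).posSemidef.isHermitian
    simpa [Matrix.IsHermitian, Matrix.conjTranspose_eq_transpose_of_trivial] using this
  have hdet : IsUnit Qt.det := hQt.det_pos.ne'.isUnit
  have hSQ : Qt⁻¹ * Qt = 1 := Matrix.nonsing_inv_mul _ hdet
  set w := Qt *ᵥ y with hw
  have hyw : Qt⁻¹ *ᵥ w = y := by
    rw [hw, Matrix.mulVec_mulVec, hSQ, Matrix.one_mulVec]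
  have hsym : ∀ u v : Fin N → ℝ, u ⬝ᵥ (R *ᵥ v) = (R *ᵥ u) ⬝ᵥ v := by
    intro u v
    rw [Matrix.dotProduct_mulVec, ← Matrix.mulVec_transpose, hRH]
  set a := R *ᵥ y with ha
  set b := R *ᵥ w with hb
  have h1 : a ⬝ᵥ b = y ⬝ᵥ y := by
    calc a ⬝ᵥ b = y ⬝ᵥ (R *ᵥ (R *ᵥ w)) := (hsym y (R *ᵥ w)).symm
      _ = y ⬝ᵥ (Qt⁻¹ *ᵥ w) := by rw [Matrix.mulVec_mulVec, hRR]
      _ = y ⬝ᵥ y := by rw [hyw]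
  have h2 : a ⬝ᵥ a = y ⬝ᵥ (Qt⁻¹ *ᵥ y) := by
    calc a ⬝ᵥ a = y ⬝ᵥ (R *ᵥ (R *ᵥ y)) := (hsym y (R *ᵥ y)).symm
      _ = y ⬝ᵥ (Qt⁻¹ *ᵥ y) := by rw [Matrix.mulVec_mulVec, hRR]
  have h3 : b ⬝ᵥ b = y ⬝ᵥ w := by
    calc b ⬝ᵥ b = w ⬝ᵥ (R *ᵥ (R *ᵥ w)) := (hsym w (R *ᵥ w)).symm
      _ = w ⬝ᵥ (Qt⁻¹ *ᵥ w) := by rw [Matrix.mulVec_mulVec, hRR]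
      _ = y ⬝ᵥ w := by rw [hyw, dotProduct_comm]
  set y' := (WithLp.equiv 2 (Fin N → ℝ)).symm y with hy'
  have h4 : y ⬝ᵥ (Qt⁻¹ *ᵥ y) ≤ r * (y ⬝ᵥ y) := by
    have e1 : y ⬝ᵥ (Qt⁻¹ *ᵥ y)
        = inner (𝕜 := ℝ) y' (Matrix.toEuclideanCLM (𝕜 := ℝ) Qt⁻¹ y') := by
      rw [dot_eq_inner, hy', clm_apply_symm]
    have hCS := real_inner_le_norm y' (Matrix.toEuclideanCLM (𝕜 := ℝ) Qt⁻¹ y')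
    have hop := (Matrix.toEuclideanCLM (𝕜 := ℝ) Qt⁻¹).le_opNorm y'
    have e2 : ‖y'‖ ^ 2 = y ⬝ᵥ y := norm_sq_eq_dot y
    nlinarith [norm_nonneg y', norm_nonneg (Matrix.toEuclideanCLM (𝕜 := ℝ) Qt⁻¹ y')]
  have hq : 0 ≤ y ⬝ᵥ w := by simpa using hQt.posSemidef.dotProduct_mulVec_nonneg y
  have ht : 0 ≤ y ⬝ᵥ y := by rw [← norm_sq_eq_dot]; positivity
  -- Cauchy–Schwarz on a, b
  have hCS2 : a ⬝ᵥ b ≤ Real.sqrt (a ⬝ᵥ a) * Real.sqrt (b ⬝ᵥ b) := by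
    have := real_inner_le_norm ((WithLp.equiv 2 (Fin N → ℝ)).symm a)
      ((WithLp.equiv 2 (Fin N → ℝ)).symm b)
    rw [← dot_eq_inner] at this
    have na : ‖(WithLp.equiv 2 (Fin N → ℝ)).symm a‖ = Real.sqrt (a ⬝ᵥ a) := by
      rw [← norm_sq_eq_dot, Real.sqrt_sq (norm_nonneg _)]
    have nb : ‖(WithLp.equiv 2 (Fin N → ℝ)).symm b‖ = Real.sqrt (b ⬝ᵥ b) := by
      rw [← norm_sq_eq_dot, Real.sqrt_sq (norm_nonneg _)]
    rwa [na, nb] at this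
  have haa : 0 ≤ a ⬝ᵥ a := by rw [← norm_sq_eq_dot]; positivity
  have hsq : (y ⬝ᵥ y) ^ 2 ≤ (r * (y ⬝ᵥ y)) * (y ⬝ᵥ w) := by
    have h5 : y ⬝ᵥ y ≤ Real.sqrt (a ⬝ᵥ a) * Real.sqrt (b ⬝ᵥ b) := h1 ▸ hCS2
    have h6 : (Real.sqrt (a ⬝ᵥ a) * Real.sqrt (b ⬝ᵥ b)) ^ 2 = (a ⬝ᵥ a) * (b ⬝ᵥ b) := by
      rw [mul_pow, Real.sq_sqrt haa, Real.sq_sqrt (h3 ▸ hq)]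
    nlinarith [Real.sqrt_nonneg (a ⬝ᵥ a), Real.sqrt_nonneg (b ⬝ᵥ b), h2 ▸ h4, h3, ht]
  rcases eq_or_lt_of_le ht with h0 | h0
  · rw [← h0]
    exact mul_nonneg hrn hq
  · have hmul : (y ⬝ᵥ y) * (y ⬝ᵥ y) ≤ (y ⬝ᵥ y) * (r * (y ⬝ᵥ w)) := by nlinarith [hsq]
    exact (mul_le_mul_iff_right₀ h0).mp hmul

theorem norm_tau_c_mu_bound {N : ℕ}
    (Qt : Matrix (Fin N) (Fin N) ℝ) (hQt : Qt.PosDef)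
    (Y : Fin N → ℝ) (hY : ∀ i, 0 < Y i)
    (τh τc : ℝ) (hτh : 0 < τh) (hτc : 0 < τc)
    (uhat : EuclideanSpace ℝ (Fin N))
    (B : Matrix (Fin N) (Fin N) ℝ)
    (hB : B = (τc • Qt + Matrix.diagonal (fun i => τh * Y i / (Y i + τh)))⁻¹)
    (μ : EuclideanSpace ℝ (Fin N))
    (hμ : μ = (WithLp.equiv 2 (Fin N → ℝ)).symm
      ((B * Matrix.diagonal (fun i => τh * Y i ^ 2 / (Y i + τh))).mulVec uhat)) :
    ‖τc • μ‖ ≤ ‖Matrix.toEuclideanCLM (𝕜 := ℝ) Qt⁻¹‖ *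
      ‖Matrix.toEuclideanCLM (𝕜 := ℝ) (Matrix.diagonal (fun i => Y i ^ 2))‖ * ‖uhat‖ := by
  set r := ‖Matrix.toEuclideanCLM (𝕜 := ℝ) Qt⁻¹‖ with hrdef
  set s := ‖Matrix.toEuclideanCLM (𝕜 := ℝ) (Matrix.diagonal (fun i => Y i ^ 2))‖ with hsdef
  have hrn : 0 ≤ r := norm_nonneg _
  have hsn : 0 ≤ s := norm_nonneg _
  set d : Fin N → ℝ := fun i => τh * Y i / (Y i + τh) with hd
  set e : Fin N → ℝ := fun i => τh * Y i ^ 2 / (Y i + τh) with he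
  have hdpos : ∀ i, 0 < d i := fun i =>
    div_pos (mul_pos hτh (hY i)) (add_pos (hY i) hτh)
  have hepos : ∀ i, 0 ≤ e i := fun i =>
    le_of_lt (div_pos (mul_pos hτh (pow_pos (hY i) 2)) (add_pos (hY i) hτh))
  have heY : ∀ i, e i ≤ Y i ^ 2 := by
    intro i
    rw [he]
    rw [div_le_iff₀ (add_pos (hY i) hτh)]
    nlinarith [sq_nonneg (Y i), (hY i).le, hτh.le]
  set A : Matrix (Fin N) (Fin N) ℝ := τc • Qt + Matrix.diagonal d with hA
  have hsmulPD : (τc • Qt).PosDef := by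
    refine Matrix.PosDef.of_dotProduct_mulVec_pos ?_ (fun x hx => ?_)
    · have h1 := hQt.1
      unfold Matrix.IsHermitian at h1 ⊢
      rw [Matrix.conjTranspose_smul, h1]
      simp
    · rw [Matrix.smul_mulVec, dotProduct_smul, smul_eq_mul]
      exact mul_pos hτc (hQt.dotProduct_mulVec_pos hx)
  have hdiagPSD : (Matrix.diagonal d).PosSemidef :=
    Matrix.PosSemidef.diagonal (fun i => (hdpos i).le)
  have hApos : A.PosDef := hsmulPD.add_posSemidef hdiagPSD
  have hdetA : IsUnit A.det := hApos.det_pos.ne'.isUnit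
  set u : Fin N → ℝ := WithLp.equiv 2 (Fin N → ℝ) uhat with hu
  set v : Fin N → ℝ := Matrix.diagonal e *ᵥ u with hv
  set y : Fin N → ℝ := A⁻¹ *ᵥ v with hy
  have hμy : μ = (WithLp.equiv 2 (Fin N → ℝ)).symm y := by
    rw [hμ, hB]
    congr 1
    rw [hy, hv, Matrix.mulVec_mulVec]
    rfl
  have hAy : A *ᵥ y = v := by
    rw [hy, Matrix.mulVec_mulVec, Matrix.mul_nonsing_inv _ hdetA, Matrix.one_mulVec]
  -- main estimate : τc * ‖y‖ ≤ r * ‖v‖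
  have hkey := key_ineq Qt hQt y
  have hdiag_nonneg : 0 ≤ y ⬝ᵥ (Matrix.diagonal d *ᵥ y) := by
    simpa using hdiagPSD.dotProduct_mulVec_nonneg y
  have hAv : y ⬝ᵥ v = τc * (y ⬝ᵥ (Qt *ᵥ y)) + y ⬝ᵥ (Matrix.diagonal d *ᵥ y) := by
    rw [← hAy, hA, Matrix.add_mulVec, dotProduct_add, Matrix.smul_mulVec,
      dotProduct_smul, smul_eq_mul]
  have hQty_nonneg : 0 ≤ y ⬝ᵥ (Qt *ᵥ y) := by simpa using hQt.posSemidef.dotProduct_mulVec_nonneg y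
  have hCS : y ⬝ᵥ v ≤ ‖(WithLp.equiv 2 (Fin N → ℝ)).symm y‖ *
      ‖(WithLp.equiv 2 (Fin N → ℝ)).symm v‖ := by
    rw [dot_eq_inner]
    exact real_inner_le_norm _ _
  set ny := ‖(WithLp.equiv 2 (Fin N → ℝ)).symm y‖ with hny
  set nv := ‖(WithLp.equiv 2 (Fin N → ℝ)).symm v‖ with hnv
  have hny2 : ny ^ 2 = y ⬝ᵥ y := norm_sq_eq_dot y
  have hnyn : 0 ≤ ny := norm_nonneg _
  have hnvn : 0 ≤ nv := norm_nonneg _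
  have hmain : τc * ny ≤ r * nv := by
    have h7 : τc * (ny ^ 2) ≤ r * (ny * nv) := by
      calc τc * (ny ^ 2) = τc * (y ⬝ᵥ y) := by rw [hny2]
        _ ≤ τc * (r * (y ⬝ᵥ (Qt *ᵥ y))) := by
            exact mul_le_mul_of_nonneg_left hkey hτc.le
        _ = r * (τc * (y ⬝ᵥ (Qt *ᵥ y))) := by ring
        _ ≤ r * (y ⬝ᵥ v) := by
            rw [hAv]
            exact mul_le_mul_of_nonneg_left (le_add_of_nonneg_right hdiag_nonneg) hrn
        _ ≤ r * (ny * nv) := mul_le_mul_of_nonneg_left hCS hrn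
    rcases eq_or_lt_of_le hnyn with h0 | h0
    · rw [← h0, mul_zero]
      exact mul_nonneg hrn hnvn
    · have h8 : (τc * ny) * ny ≤ (r * nv) * ny := by
        calc (τc * ny) * ny = τc * ny ^ 2 := by ring
          _ ≤ r * (ny * nv) := h7
          _ = (r * nv) * ny := by ring
      exact (mul_le_mul_iff_left₀ h0).mp h8
  -- estimate ‖v‖ ≤ s * ‖uhat‖
  have hvw : nv ≤ ‖(WithLp.equiv 2 (Fin N → ℝ)).symm (Matrix.diagonal (fun i => Y i ^ 2) *ᵥ u)‖ := by
    set w : Fin N → ℝ := Matrix.diagonal (fun i => Y i ^ 2) *ᵥ u with hw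
    have hsq : v ⬝ᵥ v ≤ w ⬝ᵥ w := by
      unfold dotProduct
      refine Finset.sum_le_sum fun i _ => ?_
      have hvi : v i = e i * u i := by rw [hv, Matrix.mulVec_diagonal]
      have hwi : w i = Y i ^ 2 * u i := by rw [hw, Matrix.mulVec_diagonal]
      rw [hvi, hwi]
      have h9 : e i * e i ≤ Y i ^ 2 * Y i ^ 2 :=
        mul_le_mul (heY i) (heY i) (hepos i) (sq_nonneg (Y i))
      nlinarith [h9, sq_nonneg (u i)]
    have h1 : nv ^ 2 ≤ ‖(WithLp.equiv 2 (Fin N → ℝ)).symm w‖ ^ 2 := by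
      rw [hnv, norm_sq_eq_dot, norm_sq_eq_dot]; exact hsq
    calc nv = Real.sqrt (nv ^ 2) := (Real.sqrt_sq hnvn).symm
      _ ≤ Real.sqrt (‖(WithLp.equiv 2 (Fin N → ℝ)).symm w‖ ^ 2) := Real.sqrt_le_sqrt h1
      _ = ‖(WithLp.equiv 2 (Fin N → ℝ)).symm w‖ := Real.sqrt_sq (norm_nonneg _)
  have hwu : ‖(WithLp.equiv 2 (Fin N → ℝ)).symm (Matrix.diagonal (fun i => Y i ^ 2) *ᵥ u)‖
      ≤ s * ‖uhat‖ := by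
    have := norm_mulVec_le (Matrix.diagonal (fun i => Y i ^ 2)) u
    have hueq : (WithLp.equiv 2 (Fin N → ℝ)).symm u = uhat := by
      rw [hu]; simp
    rwa [hueq] at this
  -- conclude
  have hnorm : ‖τc • μ‖ = τc * ny := by
    rw [hμy, norm_smul, Real.norm_eq_abs, abs_of_pos hτc]
  rw [hnorm]
  calc τc * ny ≤ r * nv := hmain
    _ ≤ r * (s * ‖uhat‖) := mul_le_mul_of_nonneg_left (le_trans hvw hwu) hrn
    _ = r * s * ‖uhat‖ := by ring
end

section
/- For a uniformly ergodic Markov chain {X_n} with stationary distribution π and a function g with E_π g² < ∞, the asymptotic variance σ_g² = var_π(g(X₁)) + 2∑_{i=2}^∞ cov_π(g(X₁), g(X_i)) is finite (the autocovariance series converges absolutely). -/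
open MeasureTheory ProbabilityTheory

/-- Iterates of a Markov kernel. -/
noncomputable def kernelPow {Ω : Type*} [MeasurableSpace Ω]
    (P : ProbabilityTheory.Kernel Ω Ω) : ℕ → ProbabilityTheory.Kernel Ω Ω
  | 0 => ProbabilityTheory.Kernel.id
  | n + 1 => (kernelPow P n) ∘ₖ P

open scoped ENNReal NNReal

section Aux

variable {Ω : Type*} [MeasurableSpace Ω]

lemma lintegral_sq_lt_top_iff {μ : Measure Ω} (f : Ω → ℝ) :
    (∫⁻ x, (‖f x‖₊ : ℝ≥0∞) ^ 2 ∂μ) < ∞ ↔ eLpNorm f 2 μ < ∞ := by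
  rw [eLpNorm_lt_top_iff_lintegral_rpow_enorm_lt_top (by norm_num) (by norm_num)]
  have : ((2 : ℝ≥0∞)).toReal = ((2:ℕ) : ℝ) := by norm_num
  simp_rw [this, ENNReal.rpow_natCast, enorm_eq_nnnorm]

lemma sq_enorm_integral_sub_le (μ ν : Measure Ω) [IsFiniteMeasure μ] [IsFiniteMeasure ν]
    {δ : ℝ} (hδ : 0 ≤ δ)
    (hTV : ∀ A : Set Ω, MeasurableSet A → |(μ A).toReal - (ν A).toReal| ≤ δ)
    {f : Ω → ℝ} (hf : Measurable f) :
    (‖(∫ x, f x ∂μ) - ∫ x, f x ∂ν‖₊ : ℝ≥0∞) ^ 2 ≤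
      ENNReal.ofReal (2 * δ) *
        ((∫⁻ x, (‖f x‖₊ : ℝ≥0∞) ^ 2 ∂μ) + ∫⁻ x, (‖f x‖₊ : ℝ≥0∞) ^ 2 ∂ν) := by
  rcases eq_or_lt_of_le hδ with hδ0 | hδpos
  · -- δ = 0 : the measures agree
    have hμν : μ = ν := by
      ext A hA
      have h := hTV A hA
      rw [← hδ0, abs_nonpos_iff, sub_eq_zero] at h
      exact (ENNReal.toReal_eq_toReal_iff' (measure_ne_top μ A) (measure_ne_top ν A)).mp h
    rw [hμν, sub_self]
    simp
  by_cases hfin : (∫⁻ x, (‖f x‖₊ : ℝ≥0∞) ^ 2 ∂μ) = ∞ ∨ (∫⁻ x, (‖f x‖₊ : ℝ≥0∞) ^ 2 ∂ν) = ∞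
  · have hR : ENNReal.ofReal (2 * δ) *
        ((∫⁻ x, (‖f x‖₊ : ℝ≥0∞) ^ 2 ∂μ) + ∫⁻ x, (‖f x‖₊ : ℝ≥0∞) ^ 2 ∂ν) = ∞ := by
      have hsum : (∫⁻ x, (‖f x‖₊ : ℝ≥0∞) ^ 2 ∂μ) + (∫⁻ x, (‖f x‖₊ : ℝ≥0∞) ^ 2 ∂ν) = ∞ := by
        rcases hfin with h | h
        · simp [h]
        · simp [h]
      rw [hsum, ENNReal.mul_top]
      simp [ENNReal.ofReal_eq_zero, not_le.mpr (by linarith : (0:ℝ) < 2 * δ), hδpos]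
    rw [hR]; exact le_top
  push_neg at hfin
  obtain ⟨hfinμ, hfinν⟩ := hfin
  -- integrability
  have hfμ : Integrable f μ := by
    refine MemLp.integrable one_le_two ⟨hf.aestronglyMeasurable, ?_⟩
    exact (lintegral_sq_lt_top_iff f).mp (lt_top_iff_ne_top.mpr hfinμ)
  have hfν : Integrable f ν := by
    refine MemLp.integrable one_le_two ⟨hf.aestronglyMeasurable, ?_⟩
    exact (lintegral_sq_lt_top_iff f).mp (lt_top_iff_ne_top.mpr hfinν)
  set ρ : Measure Ω := μ + ν with hρdef
  have hμρ : μ ≪ ρ := Measure.absolutelyContinuous_of_le (Measure.le_add_right le_rfl)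
  have hνρ : ν ≪ ρ := Measure.absolutelyContinuous_of_le (Measure.le_add_left le_rfl)
  set p := μ.rnDeriv ρ with hpdef
  set q := ν.rnDeriv ρ with hqdef
  have hp : Measurable p := Measure.measurable_rnDeriv μ ρ
  have hq : Measurable q := Measure.measurable_rnDeriv ν ρ
  have hsum : ∀ᵐ x ∂ρ, p x + q x = 1 := by
    have h1 := Measure.rnDeriv_add μ ν ρ
    have h2 := Measure.rnDeriv_self ρ
    filter_upwards [h1, h2] with x hx1 hx2
    have e1 : p x + q x = ((μ.rnDeriv ρ) + (ν.rnDeriv ρ)) x := rfl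
    rw [e1, ← hx1, ← hρdef] at *
    exact hx2
  set w : Ω → ℝ≥0∞ := fun x => ENNReal.ofReal |(p x).toReal - (q x).toReal| with hwdef
  have hw : Measurable w :=
    ((hp.ennreal_toReal.sub hq.ennreal_toReal).abs).ennreal_ofReal
  set S : Set Ω := {x | p x < q x} with hSdef
  have hS : MeasurableSet S := measurableSet_lt hp hq
  -- bound on S
  have hSbound : ∫⁻ x in S, w x ∂ρ ≤ ENNReal.ofReal δ := by
    have hqS : ∫⁻ x in S, q x ∂ρ = ν S := Measure.setLIntegral_rnDeriv hνρ S
    have hpS : ∫⁻ x in S, p x ∂ρ = μ S := Measure.setLIntegral_rnDeriv hμρ S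
    have hcongr : ∫⁻ x in S, w x ∂ρ = ∫⁻ x in S, (q x - p x) ∂ρ := by
      refine lintegral_congr_ae ?_
      rw [Filter.EventuallyEq, ae_restrict_iff' hS]
      filter_upwards [hsum] with x hx hxS
      have hxlt : p x < q x := hxS
      have hq1 : q x ≤ 1 := le_of_le_of_eq le_add_self hx
      have hqt : q x ≠ ∞ := (hq1.trans_lt (by norm_num)).ne
      have hpq : p x ≤ q x := hxlt.le
      have hpt : (p x).toReal ≤ (q x).toReal :=
        ENNReal.toReal_mono hqt hpq
      rw [hwdef]
      simp only
      rw [abs_sub_comm, abs_of_nonneg (by linarith),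
        ← ENNReal.toReal_sub_of_le hpq hqt,
        ENNReal.ofReal_toReal (by
          exact (lt_of_le_of_lt (tsub_le_self.trans hq1) (by norm_num)).ne)]
    rw [hcongr, lintegral_sub hp (by rw [hpS]; exact measure_ne_top μ S)
      ((ae_restrict_iff' hS).2 (ae_of_all _ fun x hx => (hx : p x < q x).le)),
      hqS, hpS]
    have h := hTV S hS
    have hν' : ν S ≤ μ S + ENNReal.ofReal δ := by
      have h1 : (ν S).toReal ≤ (μ S).toReal + δ := by
        have := abs_le.mp h
        linarith [this.1]
      calc ν S = ENNReal.ofReal ((ν S).toReal) := (ENNReal.ofReal_toReal (measure_ne_top ν S)).symm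
        _ ≤ ENNReal.ofReal ((μ S).toReal + δ) := ENNReal.ofReal_le_ofReal h1
        _ = ENNReal.ofReal ((μ S).toReal) + ENNReal.ofReal δ := ENNReal.ofReal_add ENNReal.toReal_nonneg hδ
        _ = μ S + ENNReal.ofReal δ := by rw [ENNReal.ofReal_toReal (measure_ne_top μ S)]
    exact tsub_le_iff_left.mpr hν'
  have hScbound : ∫⁻ x in Sᶜ, w x ∂ρ ≤ ENNReal.ofReal δ := by
    have hqS : ∫⁻ x in Sᶜ, q x ∂ρ = ν Sᶜ := Measure.setLIntegral_rnDeriv hνρ Sᶜ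
    have hpS : ∫⁻ x in Sᶜ, p x ∂ρ = μ Sᶜ := Measure.setLIntegral_rnDeriv hμρ Sᶜ
    have hcongr : ∫⁻ x in Sᶜ, w x ∂ρ = ∫⁻ x in Sᶜ, (p x - q x) ∂ρ := by
      refine lintegral_congr_ae ?_
      rw [Filter.EventuallyEq, ae_restrict_iff' hS.compl]
      filter_upwards [hsum] with x hx hxS
      have hxle : q x ≤ p x := not_lt.mp hxS
      have hp1 : p x ≤ 1 := le_of_le_of_eq le_self_add hx
      have hpt' : p x ≠ ∞ := (hp1.trans_lt (by norm_num)).ne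
      have hqt : (q x).toReal ≤ (p x).toReal := ENNReal.toReal_mono hpt' hxle
      rw [hwdef]
      simp only
      rw [abs_of_nonneg (by linarith),
        ← ENNReal.toReal_sub_of_le hxle hpt',
        ENNReal.ofReal_toReal (by
          exact (lt_of_le_of_lt (tsub_le_self.trans hp1) (by norm_num)).ne)]
    rw [hcongr, lintegral_sub hq (by rw [hqS]; exact measure_ne_top ν Sᶜ)
      ((ae_restrict_iff' hS.compl).2 (ae_of_all _ fun x hx => not_lt.mp hx)),
      hqS, hpS]
    have h := hTV Sᶜ hS.compl
    have hμ' : μ Sᶜ ≤ ν Sᶜ + ENNReal.ofReal δ := by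
      have h1 : (μ Sᶜ).toReal ≤ (ν Sᶜ).toReal + δ := by
        have := abs_le.mp h
        linarith [this.2]
      calc μ Sᶜ = ENNReal.ofReal ((μ Sᶜ).toReal) := (ENNReal.ofReal_toReal (measure_ne_top μ Sᶜ)).symm
        _ ≤ ENNReal.ofReal ((ν Sᶜ).toReal + δ) := ENNReal.ofReal_le_ofReal h1
        _ = ENNReal.ofReal ((ν Sᶜ).toReal) + ENNReal.ofReal δ := ENNReal.ofReal_add ENNReal.toReal_nonneg hδ
        _ = ν Sᶜ + ENNReal.ofReal δ := by rw [ENNReal.ofReal_toReal (measure_ne_top ν Sᶜ)]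
    exact tsub_le_iff_left.mpr hμ'
  have hwint : ∫⁻ x, w x ∂ρ ≤ ENNReal.ofReal (2 * δ) := by
    rw [← lintegral_add_compl w hS]
    calc (∫⁻ x in S, w x ∂ρ) + ∫⁻ x in Sᶜ, w x ∂ρ
        ≤ ENNReal.ofReal δ + ENNReal.ofReal δ := add_le_add hSbound hScbound
      _ = ENNReal.ofReal (2 * δ) := by
          rw [← ENNReal.ofReal_add hδ hδ]; ring_nf
  -- pointwise domination of w
  have hwle : ∀ᵐ x ∂ρ, w x ≤ p x + q x := by
    filter_upwards [hsum] with x hx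
    have hp1 : p x ≤ 1 := le_of_le_of_eq le_self_add hx
    have hq1 : q x ≤ 1 := le_of_le_of_eq le_add_self hx
    have hpt : p x ≠ ∞ := (hp1.trans_lt (by norm_num)).ne
    have hqt : q x ≠ ∞ := (hq1.trans_lt (by norm_num)).ne
    rw [hwdef]
    simp only
    calc ENNReal.ofReal |(p x).toReal - (q x).toReal|
        ≤ ENNReal.ofReal ((p x).toReal + (q x).toReal) := by
          refine ENNReal.ofReal_le_ofReal ?_
          refine (abs_sub _ _).trans ?_
          rw [abs_of_nonneg ENNReal.toReal_nonneg, abs_of_nonneg ENNReal.toReal_nonneg]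
      _ = p x + q x := by
          rw [ENNReal.ofReal_add ENNReal.toReal_nonneg ENNReal.toReal_nonneg,
            ENNReal.ofReal_toReal hpt, ENNReal.ofReal_toReal hqt]
  -- representation of the difference of integrals
  have hint1 : Integrable (fun x => (p x).toReal • f x) ρ :=
    (integrable_rnDeriv_smul_iff hμρ).2 hfμ
  have hint2 : Integrable (fun x => (q x).toReal • f x) ρ :=
    (integrable_rnDeriv_smul_iff hνρ).2 hfν
  have hrep : (∫ x, f x ∂μ) - ∫ x, f x ∂ν
      = ∫ x, ((p x).toReal - (q x).toReal) * f x ∂ρ := by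
    rw [← integral_rnDeriv_smul hμρ (f := f), ← integral_rnDeriv_smul hνρ (f := f),
      ← integral_sub hint1 hint2]
    congr 1
    funext x
    simp [smul_eq_mul, sub_mul]
  have henorm : (‖(∫ x, f x ∂μ) - ∫ x, f x ∂ν‖₊ : ℝ≥0∞)
      ≤ ∫⁻ x, (‖f x‖₊ : ℝ≥0∞) * w x ∂ρ := by
    rw [hrep]
    refine (enorm_integral_le_lintegral_enorm _).trans_eq ?_
    refine lintegral_congr fun x => ?_
    rw [enorm_mul, Real.enorm_eq_ofReal_abs ((p x).toReal - (q x).toReal), mul_comm, enorm_eq_nnnorm]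
  -- Hölder
  have hfe : Measurable fun x => (‖f x‖₊ : ℝ≥0∞) := hf.nnnorm.coe_nnreal_ennreal
  have hH := ENNReal.lintegral_mul_le_Lp_mul_Lq ρ Real.HolderConjugate.two_two
    ((hfe.mul (hw.pow_const (1/2 : ℝ))).aemeasurable)
    ((hw.pow_const (1/2 : ℝ)).aemeasurable)
  have hab : (fun x => ((‖f x‖₊ : ℝ≥0∞) * (w x) ^ (1/2 : ℝ)) * (w x) ^ (1/2 : ℝ))
      = fun x => (‖f x‖₊ : ℝ≥0∞) * w x := by
    funext x
    rw [mul_assoc, ← ENNReal.rpow_add_of_nonneg _ _ (by norm_num) (by norm_num)]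
    norm_num
  have ha2 : (fun x => (((‖f x‖₊ : ℝ≥0∞) * (w x) ^ (1/2 : ℝ)) ^ (2:ℝ)))
      = fun x => (‖f x‖₊ : ℝ≥0∞) ^ 2 * w x := by
    funext x
    rw [ENNReal.mul_rpow_of_nonneg _ _ (by norm_num), ← ENNReal.rpow_mul,
      show ((2:ℝ)) = ((2:ℕ):ℝ) by norm_num, ENNReal.rpow_natCast]
    norm_num
  have hb2 : (fun x => (((w x) ^ (1/2 : ℝ)) ^ (2:ℝ))) = fun x => w x := by
    funext x
    rw [← ENNReal.rpow_mul, show ((1:ℝ)/2 * 2) = 1 by norm_num, ENNReal.rpow_one]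
  simp only [Pi.mul_apply] at hH
  rw [hab, ha2, hb2] at hH
  -- bound the first Hölder factor
  have hwq : ∫⁻ x, (‖f x‖₊ : ℝ≥0∞) ^ 2 * w x ∂ρ
      ≤ (∫⁻ x, (‖f x‖₊ : ℝ≥0∞) ^ 2 ∂μ) + ∫⁻ x, (‖f x‖₊ : ℝ≥0∞) ^ 2 ∂ν := by
    have hμpart : ∫⁻ x, (‖f x‖₊ : ℝ≥0∞) ^ 2 * p x ∂ρ = ∫⁻ x, (‖f x‖₊ : ℝ≥0∞) ^ 2 ∂μ := by
      rw [← lintegral_rnDeriv_mul hμρ ((hfe.pow_const 2).aemeasurable)]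
      exact lintegral_congr fun x => mul_comm _ _
    have hνpart : ∫⁻ x, (‖f x‖₊ : ℝ≥0∞) ^ 2 * q x ∂ρ = ∫⁻ x, (‖f x‖₊ : ℝ≥0∞) ^ 2 ∂ν := by
      rw [← lintegral_rnDeriv_mul hνρ ((hfe.pow_const 2).aemeasurable)]
      exact lintegral_congr fun x => mul_comm _ _
    calc ∫⁻ x, (‖f x‖₊ : ℝ≥0∞) ^ 2 * w x ∂ρ
        ≤ ∫⁻ x, (‖f x‖₊ : ℝ≥0∞) ^ 2 * (p x + q x) ∂ρ := by
          refine lintegral_mono_ae ?_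
          filter_upwards [hwle] with x hx
          exact mul_le_mul_right hx _
      _ = (∫⁻ x, (‖f x‖₊ : ℝ≥0∞) ^ 2 * p x ∂ρ) + ∫⁻ x, (‖f x‖₊ : ℝ≥0∞) ^ 2 * q x ∂ρ := by
          simp_rw [mul_add]
          exact lintegral_add_left ((hfe.pow_const 2).mul hp) _
      _ = (∫⁻ x, (‖f x‖₊ : ℝ≥0∞) ^ 2 ∂μ) + ∫⁻ x, (‖f x‖₊ : ℝ≥0∞) ^ 2 ∂ν := by
          rw [hμpart, hνpart]
  -- combine
  have hmain : (‖(∫ x, f x ∂μ) - ∫ x, f x ∂ν‖₊ : ℝ≥0∞)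
      ≤ ((∫⁻ x, (‖f x‖₊ : ℝ≥0∞) ^ 2 ∂μ) + ∫⁻ x, (‖f x‖₊ : ℝ≥0∞) ^ 2 ∂ν) ^ (1/2 : ℝ)
        * (ENNReal.ofReal (2 * δ)) ^ (1/2 : ℝ) := by
    refine henorm.trans (hH.trans ?_)
    exact mul_le_mul' (ENNReal.rpow_le_rpow hwq (by norm_num))
      (ENNReal.rpow_le_rpow hwint (by norm_num))
  calc (‖(∫ x, f x ∂μ) - ∫ x, f x ∂ν‖₊ : ℝ≥0∞) ^ 2
      ≤ (((∫⁻ x, (‖f x‖₊ : ℝ≥0∞) ^ 2 ∂μ) + ∫⁻ x, (‖f x‖₊ : ℝ≥0∞) ^ 2 ∂ν) ^ (1/2 : ℝ)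
        * (ENNReal.ofReal (2 * δ)) ^ (1/2 : ℝ)) ^ 2 := by
        exact pow_le_pow_left' hmain 2
    _ = ENNReal.ofReal (2 * δ) *
        ((∫⁻ x, (‖f x‖₊ : ℝ≥0∞) ^ 2 ∂μ) + ∫⁻ x, (‖f x‖₊ : ℝ≥0∞) ^ 2 ∂ν) := by
        rw [mul_pow, ← ENNReal.rpow_natCast (_ ^ (1/2:ℝ)) 2, ← ENNReal.rpow_natCast ((ENNReal.ofReal (2*δ)) ^ (1/2:ℝ)) 2,
          ← ENNReal.rpow_mul, ← ENNReal.rpow_mul]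
        norm_num [mul_comm]

end Aux

lemma rpow_two_eq (x : ℝ≥0∞) : x ^ (2:ℝ) = x ^ 2 := by
  rw [show (2:ℝ) = ((2:ℕ):ℝ) by norm_num, ENNReal.rpow_natCast]

theorem asymptotic_variance_finite_of_uniformly_ergodic
    {Ω : Type*} [MeasurableSpace Ω]
    (P : ProbabilityTheory.Kernel Ω Ω) [ProbabilityTheory.IsMarkovKernel P]
    (π : Measure Ω) [IsProbabilityMeasure π]
    (hstat : ∀ A : Set Ω, MeasurableSet A → ∫⁻ x, P x A ∂π = π A)
    (M t : ℝ) (hM : 0 ≤ M) (ht : t ∈ Set.Ioo (0 : ℝ) 1)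
    (hunif : ∀ (n : ℕ) (x : Ω) (A : Set Ω), MeasurableSet A →
      |((kernelPow P n) x A).toReal - (π A).toReal| ≤ M * t ^ n)
    (g : Ω → ℝ) (hg : MemLp g 2 π) :
    Summable (fun n : ℕ =>
      |∫ x, g x * (∫ y, g y ∂((kernelPow P (n + 1)) x)) ∂π - (∫ x, g x ∂π) ^ 2|) := by
  obtain ⟨ht0, ht1⟩ := ht
  -- measurable representative
  have hsm0 := hg.aestronglyMeasurable
  set g' : Ω → ℝ := hsm0.mk g with hg'def
  have hg'sm : StronglyMeasurable g' := hsm0.stronglyMeasurable_mk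
  have hgg' : g =ᵐ[π] g' := hsm0.ae_eq_mk
  have hg' : MemLp g' 2 π := MemLp.ae_eq hgg' hg
  -- Markov property of the iterates
  have hMk : ∀ n, IsMarkovKernel (kernelPow P n) := by
    intro n
    induction n with
    | zero => rw [kernelPow]; infer_instance
    | succ n ih => rw [kernelPow]; exact (by haveI := ih; infer_instance)
  -- stationarity of π for the iterates
  have hπP : π.bind ⇑P = π := by
    ext A hA
    rw [Measure.bind_apply hA (Kernel.measurable P).aemeasurable]
    exact hstat A hA
  have hbind : ∀ n, π.bind ⇑(kernelPow P n) = π := by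
    intro n
    induction n with
    | zero =>
      have h0 : ⇑(kernelPow P 0) = Measure.dirac := by
        funext x; rw [kernelPow]; exact Kernel.id_apply x
      rw [h0, Measure.bind_dirac]
    | succ n ih =>
      have hco : ⇑(kernelPow P (n+1)) = fun x => Measure.bind (P x) ⇑(kernelPow P n) := by
        funext x; rw [kernelPow]; exact Kernel.comp_apply _ _ x
      rw [hco, ← Measure.bind_bind (Kernel.measurable P).aemeasurable (Kernel.measurable (kernelPow P n)).aemeasurable,
        hπP, ih]
  have hlin : ∀ (n : ℕ) (F : Ω → ℝ≥0∞), Measurable F →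
      ∫⁻ x, ∫⁻ y, F y ∂((kernelPow P n) x) ∂π = ∫⁻ y, F y ∂π := by
    intro n F hF
    conv_rhs => rw [← hbind n]
    rw [Measure.lintegral_bind (Kernel.measurable _).aemeasurable hF.aemeasurable]
  -- centered function
  set c : ℝ := ∫ x, g' x ∂π with hcdef
  set gb : Ω → ℝ := fun x => g' x - c with hgbdef
  have hgbsm : StronglyMeasurable gb := hg'sm.sub stronglyMeasurable_const
  have hgbm : Measurable gb := hgbsm.measurable
  have hgb2 : MemLp gb 2 π := hg'.sub (memLp_const c)
  have hgb0 : ∫ x, gb x ∂π = 0 := by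
    rw [hgbdef]
    rw [integral_sub (hg'.integrable one_le_two) (integrable_const c), integral_const,
      probReal_univ, one_smul, ← hcdef, sub_self]
  set V : ℝ≥0∞ := ∫⁻ y, (‖gb y‖₊ : ℝ≥0∞) ^ 2 ∂π with hVdef
  have hG2m : Measurable fun y => (‖gb y‖₊ : ℝ≥0∞) ^ 2 :=
    (hgbm.nnnorm.coe_nnreal_ennreal).pow_const 2
  have hVfin : V ≠ ∞ := ((lintegral_sq_lt_top_iff gb).mpr hgb2.eLpNorm_lt_top).ne
  set Vr : ℝ := V.toReal with hVrdef
  have hVr0 : 0 ≤ Vr := ENNReal.toReal_nonneg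
  have hVeq : V = ENNReal.ofReal Vr := (ENNReal.ofReal_toReal hVfin).symm
  set s : ℝ := Real.sqrt t with hsdef
  have hs0 : 0 ≤ s := Real.sqrt_nonneg t
  have hs1 : s < 1 := by
    rw [hsdef, show (1:ℝ) = Real.sqrt 1 by rw [Real.sqrt_one]]
    exact Real.sqrt_lt_sqrt ht0.le ht1
  set K : ℝ := (Real.sqrt Vr + |c|) * Real.sqrt (4 * M * Vr) with hKdef
  have hK0 : 0 ≤ K :=
    mul_nonneg (add_nonneg (Real.sqrt_nonneg _) (abs_nonneg _)) (Real.sqrt_nonneg _)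
  -- key estimate
  have key : ∀ n : ℕ,
      |∫ x, g x * (∫ y, g y ∂((kernelPow P (n + 1)) x)) ∂π - (∫ x, g x ∂π) ^ 2|
        ≤ K * s ^ (n+1) := by
    intro n
    haveI : IsMarkovKernel (kernelPow P (n+1)) := hMk (n+1)
    set κ := kernelPow P (n+1) with hκdef
    have hbindκ : π.bind ⇑κ = π := hbind (n+1)
    set δ : ℝ := M * t ^ (n+1) with hδdef
    have hδ0 : 0 ≤ δ := mul_nonneg hM (pow_nonneg ht0.le _)
    -- pass to the measurable representative
    obtain ⟨N, hNsub, hNm, hN0⟩ :=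
      exists_measurable_superset_of_null (ae_iff.mp hgg')
    have hκN : ∀ᵐ x ∂π, κ x N = 0 := by
      have hb0 : ∫⁻ x, κ x N ∂π = 0 := by
        rw [← Measure.bind_apply hNm (Kernel.measurable κ).aemeasurable, hbindκ]
        exact hN0
      have h := (lintegral_eq_zero_iff (Kernel.measurable_coe κ hNm)).1 hb0
      filter_upwards [h] with x hx using hx
    have hgκ : ∀ᵐ x ∂π, ∫ y, g y ∂(κ x) = ∫ y, g' y ∂(κ x) := by
      filter_upwards [hκN] with x hx
      refine integral_congr_ae ?_
      have hnull : κ x {y | ¬ g y = g' y} = 0 := measure_mono_null hNsub hx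
      exact ae_iff.mpr hnull
    have hT1 : ∫ x, g x * (∫ y, g y ∂(κ x)) ∂π = ∫ x, g' x * (∫ y, g' y ∂(κ x)) ∂π := by
      refine integral_congr_ae ?_
      filter_upwards [hgg', hgκ] with x hx1 hx2
      rw [hx1, hx2]
    have hTc : ∫ x, g x ∂π = c := integral_congr_ae hgg'
    -- second moments under the kernel
    have h1 : ∫⁻ x, (∫⁻ y, (‖gb y‖₊ : ℝ≥0∞)^2 ∂(κ x)) ∂π = V := hlin (n+1) _ hG2m
    have hIm : Measurable fun x => ∫⁻ y, (‖gb y‖₊ : ℝ≥0∞)^2 ∂(κ x) :=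
      Measurable.lintegral_kernel hG2m
    have haefin : ∀ᵐ x ∂π, (∫⁻ y, (‖gb y‖₊ : ℝ≥0∞)^2 ∂(κ x)) < ∞ :=
      ae_lt_top hIm (by rw [h1]; exact hVfin)
    set D : Ω → ℝ := fun x => ∫ y, gb y ∂(κ x) with hDdef
    have hDsm : StronglyMeasurable D :=
      StronglyMeasurable.integral_kernel_prod_right (κ := κ) (f := fun _ y => gb y)
        (hgbsm.comp_measurable measurable_snd)
    have hDle : ∀ x, (‖D x‖₊ : ℝ≥0∞)^2 ≤
        ENNReal.ofReal (2*δ) * ((∫⁻ y, (‖gb y‖₊ : ℝ≥0∞)^2 ∂(κ x)) + V) := by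
      intro x
      have hA := sq_enorm_integral_sub_le (κ x) π hδ0
        (fun A hA' => hunif (n+1) x A hA') hgbm
      rw [hgb0, sub_zero] at hA
      exact hA
    set W : ℝ≥0∞ := ∫⁻ x, (‖D x‖₊:ℝ≥0∞)^2 ∂π with hWdef
    have hD2 : W ≤ ENNReal.ofReal (2*δ) * (2 * V) := by
      calc W ≤ ∫⁻ x, ENNReal.ofReal (2*δ) * ((∫⁻ y, (‖gb y‖₊ : ℝ≥0∞)^2 ∂(κ x)) + V) ∂π :=
            lintegral_mono hDle
        _ = ENNReal.ofReal (2*δ) * (∫⁻ x, ((∫⁻ y, (‖gb y‖₊ : ℝ≥0∞)^2 ∂(κ x)) + V) ∂π) :=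
            lintegral_const_mul _ (hIm.add measurable_const)
        _ = ENNReal.ofReal (2*δ) * (V + V * 1) := by
            rw [lintegral_add_right _ measurable_const, h1, lintegral_const, measure_univ]
        _ = ENNReal.ofReal (2*δ) * (2 * V) := by rw [mul_one, two_mul V]
    have hDm2 : Measurable fun x => (‖D x‖₊:ℝ≥0∞)^2 :=
      (hDsm.measurable.nnnorm.coe_nnreal_ennreal).pow_const 2
    have hWfin : W ≠ ∞ := by
      refine (lt_of_le_of_lt hD2 ?_).ne
      exact ENNReal.mul_lt_top ENNReal.ofReal_lt_top
        (ENNReal.mul_lt_top (by norm_num) hVfin.lt_top)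
    have hDmem : MemLp D 2 π := ⟨hDsm.aestronglyMeasurable,
      (lintegral_sq_lt_top_iff D).mp hWfin.lt_top⟩
    have hDint : Integrable D π := hDmem.integrable one_le_two
    have hgbint : Integrable gb π := hgb2.integrable one_le_two
    -- the product gb * D is integrable
    have hprod : Integrable (fun x => gb x * D x) π := by
      refine ⟨hgbsm.aestronglyMeasurable.mul hDsm.aestronglyMeasurable, ?_⟩
      rw [hasFiniteIntegral_def]
      have hpt : ∀ x, (‖gb x * D x‖₊ : ℝ≥0∞) ≤ (‖gb x‖₊:ℝ≥0∞)^2 + (‖D x‖₊:ℝ≥0∞)^2 := by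
        intro x
        rw [nnnorm_mul, ENNReal.coe_mul]
        rcases le_total ((‖gb x‖₊:ℝ≥0∞)) ((‖D x‖₊:ℝ≥0∞)) with h | h
        · refine (mul_le_mul_left h _).trans ?_
          rw [← pow_two]; exact le_add_self
        · refine (mul_le_mul_right h _).trans ?_
          rw [← pow_two]; exact le_self_add
      calc ∫⁻ x, (‖gb x * D x‖₊ : ℝ≥0∞) ∂π
          ≤ ∫⁻ x, ((‖gb x‖₊:ℝ≥0∞)^2 + (‖D x‖₊:ℝ≥0∞)^2) ∂π := lintegral_mono hpt
        _ = V + W := lintegral_add_left hG2m _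
        _ < ∞ := ENNReal.add_lt_top.mpr ⟨hVfin.lt_top, hWfin.lt_top⟩
    -- expansion of the integrand
    have hptwise : (fun x => g' x * (∫ y, g' y ∂(κ x)))
        =ᵐ[π] fun x => gb x * D x + c * D x + (c * gb x + c * c) := by
      filter_upwards [haefin] with x hx
      have hgbintκ : Integrable gb (κ x) :=
        MemLp.integrable one_le_two ⟨hgbsm.aestronglyMeasurable,
          (lintegral_sq_lt_top_iff gb).mp hx⟩
      have hgeq : (fun y => g' y) = fun y => gb y + c := by
        funext y; rw [hgbdef]; ring
      have hgint : ∫ y, g' y ∂(κ x) = D x + c := by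
        rw [hgeq, integral_add hgbintκ (integrable_const c), integral_const,
          probReal_univ, one_smul, hDdef]
      have hg'x : g' x = gb x + c := by rw [hgbdef]; ring
      rw [hgint, hg'x]; ring
    have hsplit : ∫ x, g' x * (∫ y, g' y ∂(κ x)) ∂π
        = (∫ x, gb x * D x ∂π) + c * (∫ x, D x ∂π) + c * c := by
      have i1 : Integrable (fun x => gb x * D x + c * D x) π := hprod.add (hDint.const_mul c)
      have i2 : Integrable (fun x => c * gb x + c * c) π :=
        (hgbint.const_mul c).add (integrable_const (c*c))
      rw [integral_congr_ae hptwise, integral_add i1 i2,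
        integral_add hprod (hDint.const_mul c),
        integral_add (hgbint.const_mul c) (integrable_const (c*c)),
        integral_const_mul, integral_const_mul, hgb0, integral_const,
        probReal_univ, one_smul]
      ring
    have hval : ∫ x, g x * (∫ y, g y ∂(κ x)) ∂π - (∫ x, g x ∂π)^2
        = (∫ x, gb x * D x ∂π) + c * (∫ x, D x ∂π) := by
      rw [hT1, hTc, hsplit]; ring
    -- Cauchy-Schwarz bounds
    have hconj : Real.HolderConjugate 2 2 := Real.HolderConjugate.two_two
    have hb1 : (‖∫ x, gb x * D x ∂π‖₊ : ℝ≥0∞) ≤ V ^ (1/2:ℝ) * W ^ (1/2:ℝ) := by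
      refine (enorm_integral_le_lintegral_enorm _).trans ?_
      have hH := ENNReal.lintegral_mul_le_Lp_mul_Lq π hconj
        (hgbm.nnnorm.coe_nnreal_ennreal.aemeasurable)
        (hDsm.measurable.nnnorm.coe_nnreal_ennreal.aemeasurable)
      simp only [Pi.mul_apply] at hH
      calc ∫⁻ x, (‖gb x * D x‖₊:ℝ≥0∞) ∂π
          = ∫⁻ x, (‖gb x‖₊:ℝ≥0∞) * (‖D x‖₊:ℝ≥0∞) ∂π := by
            refine lintegral_congr fun x => ?_
            rw [nnnorm_mul, ENNReal.coe_mul]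
        _ ≤ (∫⁻ x, (‖gb x‖₊:ℝ≥0∞)^(2:ℝ) ∂π)^(1/2:ℝ) * (∫⁻ x, (‖D x‖₊:ℝ≥0∞)^(2:ℝ) ∂π)^(1/2:ℝ) := hH
        _ = V ^ (1/2:ℝ) * W ^ (1/2:ℝ) := by
            simp_rw [rpow_two_eq]; rfl
    have hb2 : (‖∫ x, D x ∂π‖₊ : ℝ≥0∞) ≤ W ^ (1/2:ℝ) := by
      refine (enorm_integral_le_lintegral_enorm _).trans ?_
      have hH := ENNReal.lintegral_mul_le_Lp_mul_Lq π hconj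
        (hDsm.measurable.nnnorm.coe_nnreal_ennreal.aemeasurable)
        (aemeasurable_const (b := (1:ℝ≥0∞)))
      simp only [Pi.mul_apply] at hH
      calc ∫⁻ x, (‖D x‖₊:ℝ≥0∞) ∂π
          = ∫⁻ x, (‖D x‖₊:ℝ≥0∞) * 1 ∂π := by simp
        _ ≤ (∫⁻ x, (‖D x‖₊:ℝ≥0∞)^(2:ℝ) ∂π)^(1/2:ℝ) * (∫⁻ x, (1:ℝ≥0∞)^(2:ℝ) ∂π)^(1/2:ℝ) := hH
        _ = W ^ (1/2:ℝ) := by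
            simp_rw [rpow_two_eq]
            rw [one_pow, lintegral_one, measure_univ, ENNReal.one_rpow, mul_one]
    -- numerical bound for W
    have hWle : W ≤ ENNReal.ofReal (4 * M * Vr * t^(n+1)) := by
      refine hD2.trans (le_of_eq ?_)
      rw [hVeq, show ((2:ℝ≥0∞)) = ENNReal.ofReal (2:ℝ) by simp,
        ← ENNReal.ofReal_mul (by norm_num), ← ENNReal.ofReal_mul (by positivity)]
      congr 1
      rw [hδdef]; ring
    have hsqw : W ^ (1/2:ℝ) ≤ ENNReal.ofReal (Real.sqrt (4*M*Vr) * s^(n+1)) := by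
      calc W ^ (1/2:ℝ) ≤ (ENNReal.ofReal (4*M*Vr*t^(n+1))) ^ (1/2:ℝ) :=
            ENNReal.rpow_le_rpow hWle (by norm_num)
        _ = ENNReal.ofReal ((4*M*Vr*t^(n+1)) ^ (1/2:ℝ)) :=
            ENNReal.ofReal_rpow_of_nonneg (by positivity) (by norm_num)
        _ = ENNReal.ofReal (Real.sqrt (4*M*Vr) * s^(n+1)) := by
            rw [← Real.sqrt_eq_rpow, Real.sqrt_mul (by positivity)]
            congr 1
            have h2 : (s^(n+1))^2 = t^(n+1) := by
              rw [← pow_mul, mul_comm (n+1) 2, pow_mul, hsdef, Real.sq_sqrt ht0.le]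
            rw [← h2, Real.sqrt_sq (pow_nonneg hs0 _)]
    have hsqv : V ^ (1/2:ℝ) ≤ ENNReal.ofReal (Real.sqrt Vr) := by
      rw [hVeq, ENNReal.ofReal_rpow_of_nonneg hVr0 (by norm_num), ← Real.sqrt_eq_rpow]
    -- put everything together
    have hsum2 : ENNReal.ofReal |(∫ x, gb x * D x ∂π) + c * (∫ x, D x ∂π)|
        ≤ ENNReal.ofReal (K * s^(n+1)) := by
      calc ENNReal.ofReal |(∫ x, gb x * D x ∂π) + c * (∫ x, D x ∂π)|
          = (‖(∫ x, gb x * D x ∂π) + c * (∫ x, D x ∂π)‖₊ : ℝ≥0∞) :=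
            (Real.enorm_eq_ofReal_abs _).symm
        _ ≤ (‖∫ x, gb x * D x ∂π‖₊ : ℝ≥0∞) + (‖c * ∫ x, D x ∂π‖₊ : ℝ≥0∞) := by
            exact_mod_cast nnnorm_add_le _ _
        _ ≤ V ^ (1/2:ℝ) * W ^ (1/2:ℝ) + ENNReal.ofReal |c| * W ^ (1/2:ℝ) := by
            refine add_le_add hb1 ?_
            rw [nnnorm_mul, ENNReal.coe_mul, ← enorm_eq_nnnorm c, Real.enorm_eq_ofReal_abs c]
            exact mul_le_mul_right hb2 _
        _ = (V ^ (1/2:ℝ) + ENNReal.ofReal |c|) * W ^ (1/2:ℝ) := by ring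
        _ ≤ (ENNReal.ofReal (Real.sqrt Vr) + ENNReal.ofReal |c|)
              * ENNReal.ofReal (Real.sqrt (4*M*Vr) * s^(n+1)) :=
            mul_le_mul' (add_le_add hsqv le_rfl) hsqw
        _ = ENNReal.ofReal (K * s^(n+1)) := by
            rw [← ENNReal.ofReal_add (Real.sqrt_nonneg _) (abs_nonneg _),
              ← ENNReal.ofReal_mul (by positivity), hKdef]
            congr 1
            ring
    rw [hval]
    have habs : |(∫ x, gb x * D x ∂π) + c * (∫ x, D x ∂π)| ≤ K * s^(n+1) :=
      (ENNReal.ofReal_le_ofReal_iff (by positivity)).mp hsum2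
    exact habs
  -- conclude summability
  refine Summable.of_nonneg_of_le (fun n => abs_nonneg _) key ?_
  have hgeo := (summable_geometric_of_lt_one hs0 hs1).mul_left (K * s)
  refine hgeo.congr fun n => ?_
  rw [pow_succ]; ring
end
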